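/- Fix a nonnegative nondecreasing concave W : ℕ → ℝ with W(0)=0, and ρ ≥ 1. Define F(1) = W(1) and recursively F(j+1) = max over ℓ ∈ {1,...,n} of [min(j, n-ℓ)·F(j) - W(j)·ρ + W(ℓ)] / min(ℓ, n-j) for j = 1,...,n-1. If ĵ is the smallest index with F(ĵ+1) > F(ĵ), then F(j+1) > F(j) for all j = ĵ, ..., n-1 (i.e., once F starts increasing, it keeps increasing). -/
import Mathlib

set_option maxHeartbeats 1000000 in
theorem f_continues_increasing
    (n : ℕ) (hn : 2 ≤ n)
    (W : ℕ → ℝ)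
    (h0 : W 0 = 0)
    (hnonneg : ∀ x : ℕ, 0 ≤ W x)
    (hmono : ∀ x : ℕ, W x ≤ W (x + 1))
    (hconc : ∀ x : ℕ, 1 ≤ x → W (x + 1) - W x ≤ W x - W (x - 1))
    (ρ : ℝ) (hρ : 1 ≤ ρ)
    (F : ℕ → ℝ)
    (hF1 : F 1 = W 1)
    (hFrec : ∀ j : ℕ, 1 ≤ j → j ≤ n - 1 →
      F (j + 1) = (Finset.Icc 1 n).sup'
        (Finset.nonempty_Icc.mpr (by omega))
        (fun ℓ => ((min j (n - ℓ) : ℕ) * F j - W j * ρ + W ℓ) / (min ℓ (n - j) : ℕ)))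
    (jhat : ℕ) (hjhat1 : 1 ≤ jhat) (hjhatn : jhat ≤ n - 1)
    (hinc : F jhat < F (jhat + 1))
    (hfirst : ∀ j : ℕ, 1 ≤ j → j < jhat → F (j + 1) ≤ F j) :
    ∀ j : ℕ, jhat ≤ j → j ≤ n - 1 → F j < F (j + 1) := by
  have hρ0 : (0:ℝ) ≤ ρ := by linarith
  -- maximizer extraction helper
  have exmax : ∀ f : ℕ → ℝ, ∃ ℓ, (1 ≤ ℓ ∧ ℓ ≤ n) ∧
      (Finset.Icc 1 n).sup' (Finset.nonempty_Icc.mpr (by omega : (1:ℕ) ≤ n)) f = f ℓ := by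
    intro f
    obtain ⟨ℓ, hm, he⟩ :=
      Finset.exists_mem_eq_sup' (Finset.nonempty_Icc.mpr (by omega : (1:ℕ) ≤ n)) f
    exact ⟨ℓ, Finset.mem_Icc.mp hm, he⟩
  -- increments of W are nonincreasing
  have hd : ∀ i k : ℕ, i ≤ k → W (k + 1) - W k ≤ W (i + 1) - W i := by
    intro i k hik
    induction k, hik using Nat.le_induction with
    | base => exact le_refl _
    | succ k hik ih =>
      have h := hconc (k + 1) (by omega)
      simp only [Nat.add_sub_cancel] at h
      linarith
  -- chord above: W ℓ - W j ≤ (ℓ - j) * (W (j+1) - W j) for j ≤ ℓ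
  have chordA : ∀ j ℓ : ℕ, j ≤ ℓ → W ℓ - W j ≤ ((ℓ - j : ℕ) : ℝ) * (W (j + 1) - W j) := by
    intro j ℓ hjl
    induction ℓ, hjl using Nat.le_induction with
    | base => simp
    | succ ℓ hjl ih =>
      have h1 := hd j ℓ hjl
      have hc : ((ℓ + 1 - j : ℕ) : ℝ) = ((ℓ - j : ℕ) : ℝ) + 1 := by
        have : ℓ + 1 - j = (ℓ - j) + 1 := by omega
        rw [this]; push_cast; ring
      rw [hc]
      nlinarith [ih, h1]
  -- chord below: (j - ℓ) * (W (j+1) - W j) ≤ W j - W ℓ for ℓ ≤ j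
  have chordB : ∀ ℓ j : ℕ, ℓ ≤ j → ((j - ℓ : ℕ) : ℝ) * (W (j + 1) - W j) ≤ W j - W ℓ := by
    intro ℓ j hlj
    induction j, hlj using Nat.le_induction with
    | base => simp
    | succ j hlj ih =>
      have h1 := hd j (j + 1) (Nat.le_succ j)
      have hc : ((j + 1 - ℓ : ℕ) : ℝ) = ((j - ℓ : ℕ) : ℝ) + 1 := by
        have : j + 1 - ℓ = (j - ℓ) + 1 := by omega
        rw [this]; push_cast; ring
      have hnn : (0:ℝ) ≤ ((j - ℓ : ℕ) : ℝ) := Nat.cast_nonneg _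
      rw [hc]
      nlinarith [ih, h1, mul_le_mul_of_nonneg_left h1 hnn]
  -- Invariant E : for ℓ > j, W ℓ - ρ * W j ≤ (ℓ - j) * F j
  have E : ∀ j : ℕ, 1 ≤ j → j ≤ n - 1 → ∀ ℓ : ℕ, j < ℓ → ℓ ≤ n →
      W ℓ - ρ * W j ≤ ((ℓ - j : ℕ) : ℝ) * F j := by
    intro j hj1
    induction j, hj1 using Nat.le_induction with
    | base =>
      intro _ ℓ hℓ1 hℓn
      rw [hF1]
      have hca := chordA 1 ℓ hℓ1.le
      have hc1 : W 2 - W 1 ≤ W 1 := by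
        have := hconc 1 le_rfl
        simpa [h0] using this
      have hnn : (0:ℝ) ≤ ((ℓ - 1 : ℕ) : ℝ) := Nat.cast_nonneg _
      have h1 : W ℓ - W 1 ≤ ((ℓ - 1 : ℕ) : ℝ) * W 1 := by
        calc W ℓ - W 1 ≤ ((ℓ - 1 : ℕ) : ℝ) * (W 2 - W 1) := by simpa using hca
        _ ≤ ((ℓ - 1 : ℕ) : ℝ) * W 1 := mul_le_mul_of_nonneg_left hc1 hnn
      nlinarith [hnonneg 1]
    | succ j hj1 ih =>
      intro hjn ℓ hℓ hℓn
      have ihj := ih (by omega)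
      have hℓ1' : 1 ≤ ℓ := by omega
      have hFj := hFrec j (by omega) (by omega)
      have hle : ((min j (n - ℓ) : ℕ) * F j - W j * ρ + W ℓ) / (min ℓ (n - j) : ℕ)
          ≤ F (j + 1) := by
        rw [hFj]
        exact Finset.le_sup'
          (fun ℓ => ((min j (n - ℓ) : ℕ) * F j - W j * ρ + W ℓ) / (min ℓ (n - j) : ℕ))
          (Finset.mem_Icc.mpr ⟨hℓ1', hℓn⟩)
      set a := min j (n - ℓ) with ha
      set b := min ℓ (n - j) with hb
      have hab : a + (ℓ - j) = b := by omega
      have hb1 : 1 ≤ b := by omega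
      have hbpos : (0:ℝ) < (b : ℝ) := by exact_mod_cast hb1
      have hA0 : (0:ℝ) ≤ (a : ℝ) := Nat.cast_nonneg _
      have hS2 : 2 ≤ ℓ - j := by omega
      have hSpos : (0:ℝ) < ((ℓ - j : ℕ) : ℝ) := by
        have : (0:ℕ) < ℓ - j := by omega
        exact_mod_cast this
      have hR : (a : ℝ) * F j - W j * ρ + W ℓ ≤ F (j + 1) * (b : ℝ) :=
        (div_le_iff₀ hbpos).mp hle
      have hEj : W ℓ - ρ * W j ≤ ((ℓ - j : ℕ) : ℝ) * F j := ihj ℓ (by omega) hℓn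
      have hBcast : (a : ℝ) + ((ℓ - j : ℕ) : ℝ) = (b : ℝ) := by exact_mod_cast hab
      have hBB : (b : ℝ) * (W ℓ - ρ * W j)
          = (a : ℝ) * (W ℓ - ρ * W j) + ((ℓ - j : ℕ) : ℝ) * (W ℓ - ρ * W j) := by
        rw [← hBcast]; ring
      -- star : W ℓ - ρ * W j ≤ (ℓ - j) * F (j+1)
      have hstar : W ℓ - ρ * W j ≤ ((ℓ - j : ℕ) : ℝ) * F (j + 1) := by
        have h2 : (b : ℝ) * (W ℓ - ρ * W j) ≤ (b : ℝ) * (((ℓ - j : ℕ) : ℝ) * F (j + 1)) := by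
          have m1 := mul_le_mul_of_nonneg_left hEj hA0
          have m2 := mul_le_mul_of_nonneg_left hR (le_of_lt hSpos)
          nlinarith [m1, m2, hBB]
        exact le_of_mul_le_mul_left h2 hbpos
      have hca := chordA j ℓ (by omega)
      -- key W inequality
      have hkey : W ℓ ≤ ρ * (W j + ((ℓ - j : ℕ) : ℝ) * (W (j + 1) - W j)) := by
        nlinarith [hca, hnonneg ℓ,
          mul_nonneg (sub_nonneg.mpr hρ) (by linarith [hca, hnonneg ℓ] :
            (0:ℝ) ≤ W j + ((ℓ - j : ℕ) : ℝ) * (W (j + 1) - W j))]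
      have hc2 : ((ℓ - (j + 1) : ℕ) : ℝ) = ((ℓ - j : ℕ) : ℝ) - 1 := by
        have h3 : ℓ - j = (ℓ - (j + 1)) + 1 := by omega
        rw [show ℓ - (j+1) = (ℓ - j) - 1 from by omega]
        have : 1 ≤ ℓ - j := by omega
        push_cast [this]
        ring
      rw [hc2]
      have h3 : ((ℓ - j : ℕ) : ℝ) * (W ℓ - ρ * W (j + 1)) ≤
          ((ℓ - j : ℕ) : ℝ) * ((((ℓ - j : ℕ) : ℝ) - 1) * F (j + 1)) := by
        have m3 := mul_le_mul_of_nonneg_left hstar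
          (by linarith : (0:ℝ) ≤ ((ℓ - j : ℕ) : ℝ) - 1)
        nlinarith [m3, hkey]
      exact le_of_mul_le_mul_left h3 hSpos
  -- main invariant induction
  have main : ∀ j : ℕ, jhat ≤ j → j ≤ n - 1 →
      F j < F (j + 1) ∧ ρ * (W (j + 1) - W j) < F (j + 1) := by
    intro j hj
    induction j, hj using Nat.le_induction with
    | base =>
      intro _
      refine ⟨hinc, ?_⟩
      have hFj := hFrec jhat hjhat1 hjhatn
      obtain ⟨ℓ, ⟨hℓ1, hℓn⟩, hmax⟩ := exmax
        (fun ℓ => ((min jhat (n - ℓ) : ℕ) * F jhat - W jhat * ρ + W ℓ) / (min ℓ (n - jhat) : ℕ))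
      have heq : F (jhat + 1)
          = ((min jhat (n - ℓ) : ℕ) * F jhat - W jhat * ρ + W ℓ) / (min ℓ (n - jhat) : ℕ) :=
        hFj.trans hmax
      set a := min jhat (n - ℓ) with ha
      set b := min ℓ (n - jhat) with hb
      have hb1 : 1 ≤ b := by omega
      have hbpos : (0:ℝ) < (b : ℝ) := by exact_mod_cast hb1
      have hgt' : F jhat * (b : ℝ) < (a : ℝ) * F jhat - W jhat * ρ + W ℓ := by
        rw [heq] at hinc
        exact (lt_div_iff₀ hbpos).mp hinc
      rcases lt_or_ge jhat ℓ with hcase | hcase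
      · -- impossible by E
        exfalso
        have hEj := E jhat hjhat1 hjhatn ℓ hcase hℓn
        have hab : a + (ℓ - jhat) = b := by omega
        have hBcast : (a : ℝ) + ((ℓ - jhat : ℕ) : ℝ) = (b : ℝ) := by exact_mod_cast hab
        have hBF : (b : ℝ) * F jhat
            = (a : ℝ) * F jhat + ((ℓ - jhat : ℕ) : ℝ) * F jhat := by
          rw [← hBcast]; ring
        linarith [hEj, hgt', hBF]
      · -- witness ℓ ≤ jhat gives F jhat > ρ * Δ
        have hab : a = b + (jhat - ℓ) := by omega
        have hAcast : (a : ℝ) = (b : ℝ) + ((jhat - ℓ : ℕ) : ℝ) := by exact_mod_cast hab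
        have hAF : (a : ℝ) * F jhat
            = (b : ℝ) * F jhat + ((jhat - ℓ : ℕ) : ℝ) * F jhat := by
          rw [hAcast]; ring
        have hcb := chordB ℓ jhat hcase
        have hT0 : (0:ℝ) ≤ ((jhat - ℓ : ℕ) : ℝ) := Nat.cast_nonneg _
        have hw : ρ * W jhat - W ℓ < ((jhat - ℓ : ℕ) : ℝ) * F jhat := by
          linarith [hgt', hAF]
        have hge : ((jhat - ℓ : ℕ) : ℝ) * (ρ * (W (jhat + 1) - W jhat))
            ≤ ρ * W jhat - W ℓ := by
          have m1 := mul_le_mul_of_nonneg_left hcb hρ0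
          have m2 := mul_nonneg (sub_nonneg.mpr hρ) (hnonneg ℓ)
          nlinarith [m1, m2]
        have hFgt : ρ * (W (jhat + 1) - W jhat) < F jhat := by
          by_contra hcon
          push_neg at hcon
          have := mul_le_mul_of_nonneg_left hcon hT0
          linarith [hw, hge, this]
        linarith [hinc, hFgt]
    | succ j hj ih =>
      intro hjn
      obtain ⟨ih1, ih2⟩ := ih (by omega)
      have hFj := hFrec j (by omega) (by omega)
      obtain ⟨ℓ, ⟨hℓ1, hℓn⟩, hmax⟩ := exmax
        (fun ℓ => ((min j (n - ℓ) : ℕ) * F j - W j * ρ + W ℓ) / (min ℓ (n - j) : ℕ))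
      have heq0 : F (j + 1)
          = ((min j (n - ℓ) : ℕ) * F j - W j * ρ + W ℓ) / (min ℓ (n - j) : ℕ) :=
        hFj.trans hmax
      set a := min j (n - ℓ) with ha
      set b := min ℓ (n - j) with hb
      have hb1 : 1 ≤ b := by omega
      have hbpos : (0:ℝ) < (b : ℝ) := by exact_mod_cast hb1
      have heq : F (j + 1) * (b : ℝ) = (a : ℝ) * F j - W j * ρ + W ℓ := by
        rw [heq0, div_mul_cancel₀]
        exact ne_of_gt hbpos
      -- recursion at step j+1, candidate ℓ
      have hFj2 := hFrec (j + 1) (by omega) hjn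
      have hle : ((min (j + 1) (n - ℓ) : ℕ) * F (j + 1) - W (j + 1) * ρ + W ℓ)
          / (min ℓ (n - (j + 1)) : ℕ) ≤ F (j + 1 + 1) := by
        rw [hFj2]
        exact Finset.le_sup'
          (fun ℓ => ((min (j + 1) (n - ℓ) : ℕ) * F (j + 1) - W (j + 1) * ρ + W ℓ)
            / (min ℓ (n - (j + 1)) : ℕ))
          (Finset.mem_Icc.mpr ⟨hℓ1, hℓn⟩)
      set a' := min (j + 1) (n - ℓ) with ha'
      set b' := min ℓ (n - (j + 1)) with hb'
      have hb'1 : 1 ≤ b' := by omega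
      have hb'pos : (0:ℝ) < (b' : ℝ) := by exact_mod_cast hb'1
      have hid : a' + b = a + b' + 1 := by omega
      have hidc : (a' : ℝ) + (b : ℝ) = (a : ℝ) + (b' : ℝ) + 1 := by exact_mod_cast hid
      have hidF : ((a' : ℝ) + (b : ℝ)) * F (j + 1)
          = ((a : ℝ) + (b' : ℝ) + 1) * F (j + 1) := by rw [hidc]
      have hA0 : (0:ℝ) ≤ (a : ℝ) := Nat.cast_nonneg _
      have hmul : (0:ℝ) ≤ (a : ℝ) * (F (j + 1) - F j) :=
        mul_nonneg hA0 (sub_nonneg.mpr ih1.le)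
      have hnum : F (j + 1) * (b' : ℝ) < (a' : ℝ) * F (j + 1) - W (j + 1) * ρ + W ℓ := by
        nlinarith [heq, hidF, hmul, ih2]
      have hlt : F (j + 1) < F (j + 1 + 1) :=
        lt_of_lt_of_le ((lt_div_iff₀ hb'pos).mpr hnum) hle
      refine ⟨hlt, ?_⟩
      have hcc := hconc (j + 1) (by omega)
      simp only [Nat.add_sub_cancel] at hcc
      have := mul_le_mul_of_nonneg_left hcc hρ0
      linarith [this, ih2, hlt]
  intro j hj hjn
  exact (main j hj hjn).1
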